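/- (Divergence rate for solutions of d-dimensional FDEs) Let α ∈ (0,1), T > 0, d ≥ 1, let f : [0,T] × ℝ^d → ℝ^d be continuous and satisfy the Lipschitz condition: there is a continuous function L : [0,T] → [0,∞) with ‖f(t,x) - f(t,y)‖ ≤ L(t)‖x - y‖ for all t ∈ [0,T] and x, y ∈ ℝ^d, where ‖·‖ is the Euclidean norm. Let x₁, x₂ : [0,T] → ℝ^d be continuous solutions of the Volterra integral equation xᵢ(t) = xᵢ(0) + (1/Γ(α)) ∫_0^t (t-τ)^(α-1) f(τ, xᵢ(τ)) dτ for all t ∈ [0,T]. Then for every t ∈ [0,T]: ‖x₂(t) - x₁(t)‖ ≤ ‖x₂(0) - x₁(0)‖ · E_α((max_{0 ≤ τ ≤ t} L(τ)) · t^α). -/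

import Mathlib

open Real Set intervalIntegral

open MeasureTheory Filter

/-- The one-parameter Mittag-Leffler function `E_α(z) = ∑_{k=0}^∞ z^k / Γ(αk + 1)`. -/
noncomputable def mittagLeffler (α z : ℝ) : ℝ :=
  ∑' k : ℕ, z ^ k / Real.Gamma (α * k + 1)

lemma aux_continuous_rpow_const {q : ℝ} (hq : 0 ≤ q) : Continuous fun x : ℝ => x ^ q := by
  rcases eq_or_lt_of_le hq with h | h
  · simp only [← h, Real.rpow_zero]
    exact continuous_const
  · exact continuous_iff_continuousAt.2 fun x => Real.continuousAt_rpow_const x q (Or.inr hq)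

lemma II_rpow {α s : ℝ} (hα : 0 < α) (hs : 0 ≤ s) :
    IntervalIntegrable (fun τ => (s - τ) ^ (α - 1)) MeasureTheory.volume 0 s := by
  have h : IntervalIntegrable (fun x : ℝ => x ^ (α - 1)) MeasureTheory.volume 0 s :=
    intervalIntegrable_rpow' (by linarith)
  have := (h.comp_sub_left s).symm
  simpa using this

lemma II_rpow_smul {α s : ℝ} (hα : 0 < α) (hs : 0 ≤ s) {E : Type*} [NormedAddCommGroup E]
    [NormedSpace ℝ E] {F : ℝ → E} (hF : ContinuousOn F (Set.Icc 0 s)) :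
    IntervalIntegrable (fun τ => (s - τ) ^ (α - 1) • F τ) MeasureTheory.volume 0 s := by
  rw [intervalIntegrable_iff, uIoc_of_le hs]
  have h1 : MeasureTheory.IntegrableOn (fun τ => (s - τ) ^ (α - 1)) (Set.Ioc 0 s) := by
    have := II_rpow hα hs
    rwa [intervalIntegrable_iff, uIoc_of_le hs] at this
  obtain ⟨C, hC⟩ := isCompact_Icc.exists_bound_of_continuousOn hF
  exact h1.smul_of_top_left
    (MeasureTheory.memLp_top_of_bound
      ((hF.mono Set.Ioc_subset_Icc_self).aestronglyMeasurable measurableSet_Ioc) C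
      (MeasureTheory.ae_restrict_of_forall_mem measurableSet_Ioc fun x hx =>
        hC x (Set.Ioc_subset_Icc_self hx)))

lemma gamma_mul_rpow_le {α x : ℝ} (hα : 0 < α) (hx : 0 < x) :
    Real.Gamma (x + 1) * x ^ α ≤ Real.Gamma (x + 1 + α) := by
  have hslope := Real.convexOn_log_Gamma.slope_mono_adjacent
    (show x ∈ Set.Ioi (0:ℝ) from hx) (show x + 1 + α ∈ Set.Ioi (0:ℝ) by simp; linarith)
    (show x < x + 1 by linarith) (show x + 1 < x + 1 + α by linarith)
  have hΓx : 0 < Real.Gamma x := Real.Gamma_pos_of_pos hx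
  have hΓx1 : 0 < Real.Gamma (x + 1) := Real.Gamma_pos_of_pos (by linarith)
  have hΓ2 : 0 < Real.Gamma (x + 1 + α) := Real.Gamma_pos_of_pos (by linarith)
  simp only [Function.comp] at hslope
  rw [Real.Gamma_add_one hx.ne'] at hslope
  rw [Real.log_mul hx.ne' hΓx.ne'] at hslope
  -- hslope : (log x + log Γ x - log Γ x) / (x+1-x) ≤ (log Γ(x+1+α) - log Γ(x+1)) / (x+1+α-(x+1))
  have h1 : (Real.log x + Real.log (Real.Gamma x) - Real.log (Real.Gamma x)) / (x + 1 - x)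
      = Real.log x := by ring
  have h2 : (x + 1 + α - (x + 1)) = α := by ring
  rw [h1, h2] at hslope
  rw [Real.Gamma_add_one hx.ne']
  have key : Real.log x * α + Real.log (x * Real.Gamma x) ≤ Real.log (Real.Gamma (x + 1 + α)) := by
    rw [Real.log_mul hx.ne' hΓx.ne']
    have h3 := (le_div_iff₀ hα).mp hslope
    linarith
  have := Real.exp_le_exp.2 key
  rw [Real.exp_add, Real.exp_log hΓ2, Real.exp_log (by positivity : (0:ℝ) < x * Real.Gamma x)] at this
  rw [Real.rpow_def_of_pos hx]
  linarith [this]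


lemma real_beta {p q : ℝ} (hp : 0 < p) (hq : 0 < q) :
    ∫ x in (0:ℝ)..1, x ^ (p - 1) * (1 - x) ^ (q - 1)
      = Real.Gamma p * Real.Gamma q / Real.Gamma (p + q) := by
  have h := Complex.Gamma_mul_Gamma_eq_betaIntegral
    (s := (p : ℂ)) (t := (q : ℂ)) (by simpa using hp) (by simpa using hq)
  have hbeta : Complex.betaIntegral p q
      = ((∫ x in (0:ℝ)..1, x ^ (p - 1) * (1 - x) ^ (q - 1) : ℝ) : ℂ) := by
    rw [Complex.betaIntegral, ← intervalIntegral.integral_ofReal]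
    apply intervalIntegral.integral_congr
    intro x hx
    rw [Set.uIcc_of_le zero_le_one] at hx
    push_cast
    rw [Complex.ofReal_cpow hx.1, Complex.ofReal_cpow (by linarith [hx.2] : (0:ℝ) ≤ 1 - x)]
    push_cast
    ring
  rw [hbeta] at h
  rw [Complex.Gamma_ofReal, Complex.Gamma_ofReal,
    show ((p : ℂ) + q) = ((p + q : ℝ) : ℂ) by push_cast; ring, Complex.Gamma_ofReal] at h
  have hΓpq : Real.Gamma (p + q) ≠ 0 := (Real.Gamma_pos_of_pos (by linarith)).ne'
  have h2 : Real.Gamma p * Real.Gamma q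
      = Real.Gamma (p + q) * ∫ x in (0:ℝ)..1, x ^ (p - 1) * (1 - x) ^ (q - 1) := by
    exact_mod_cast h
  field_simp
  linarith [h2]

lemma beta_scaled {α q s : ℝ} (hα : 0 < α) (hq : 0 ≤ q) (hs : 0 ≤ s) :
    ∫ τ in (0:ℝ)..s, (s - τ) ^ (α - 1) * τ ^ q
      = Real.Gamma α * Real.Gamma (q + 1) / Real.Gamma (α + q + 1) * s ^ (α + q) := by
  rcases eq_or_lt_of_le hs with rfl | hs
  · simp [Real.zero_rpow (by positivity : α + q ≠ 0)]
  · have hsub := intervalIntegral.smul_integral_comp_mul_left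
      (f := fun τ => (s - τ) ^ (α - 1) * τ ^ q) (a := (0:ℝ)) (b := 1) s
    rw [mul_zero, mul_one] at hsub
    rw [← hsub]
    have hcong : ∫ x in (0:ℝ)..1, (s - s * x) ^ (α - 1) * (s * x) ^ q
        = ∫ x in (0:ℝ)..1, (s ^ (α - 1) * s ^ q) * ((1 - x) ^ (α - 1) * x ^ q) := by
      apply intervalIntegral.integral_congr
      intro x hx
      rw [Set.uIcc_of_le zero_le_one] at hx
      have h1x : (0:ℝ) ≤ 1 - x := by linarith [hx.2]
      dsimp only
      rw [show s - s * x = s * (1 - x) by ring,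
        Real.mul_rpow hs.le h1x, Real.mul_rpow hs.le hx.1]
      ring
    rw [hcong, intervalIntegral.integral_const_mul]
    have hbeta : ∫ x in (0:ℝ)..1, (1 - x) ^ (α - 1) * x ^ q
        = Real.Gamma (q + 1) * Real.Gamma α / Real.Gamma (q + 1 + α) := by
      have := real_beta (p := q + 1) (q := α) (by linarith) hα
      rw [← this]
      apply intervalIntegral.integral_congr
      intro x hx
      rw [show q + 1 - 1 = q by ring]
      ring
    rw [hbeta]
    rw [smul_eq_mul]
    have hrw : s * (s ^ (α - 1) * s ^ q) = s ^ (α + q) := by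
      nth_rewrite 1 [← Real.rpow_one s]
      rw [← Real.rpow_add hs, ← Real.rpow_add hs]
      congr 1
      ring
    have harg : q + 1 + α = α + q + 1 := by ring
    rw [harg, show s * (s ^ (α - 1) * s ^ q
        * (Real.Gamma (q + 1) * Real.Gamma α / Real.Gamma (α + q + 1)))
      = s * (s ^ (α - 1) * s ^ q)
        * (Real.Gamma (q + 1) * Real.Gamma α / Real.Gamma (α + q + 1)) from by ring, hrw]
    ring

lemma ml_summable_aux {α β : ℝ} (hα : 0 < α) (hβ : 0 ≤ β) (z : ℝ) :
    Summable fun k : ℕ => z ^ k / Real.Gamma (α * k + β + 1) := by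
  apply summable_of_ratio_norm_eventually_le (r := 1/2) (by norm_num)
  have htend : Tendsto (fun k : ℕ => (α * k + β) ^ α) atTop atTop := by
    apply (tendsto_rpow_atTop hα).comp
    apply tendsto_atTop_add_const_right
    exact tendsto_natCast_atTop_atTop.const_mul_atTop hα
  have hev := htend.eventually_ge_atTop (2 * |z| + 1)
  filter_upwards [hev, Filter.eventually_ge_atTop 1] with k hk hk1
  have hx : 0 < α * k + β := by
    have : (1:ℝ) ≤ (k:ℝ) := by exact_mod_cast hk1
    nlinarith
  have hΓ1 : 0 < Real.Gamma (α * k + β + 1) := Real.Gamma_pos_of_pos (by linarith)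
  have hΓ2 : 0 < Real.Gamma (α * (k+1:ℕ) + β + 1) := Real.Gamma_pos_of_pos (by
    push_cast; nlinarith)
  have hge : Real.Gamma (α * k + β + 1) * (2 * |z| + 1) ≤ Real.Gamma (α * (k+1:ℕ) + β + 1) := by
    have h1 := gamma_mul_rpow_le hα hx
    have h2 : Real.Gamma (α * k + β + 1) * (2 * |z| + 1)
        ≤ Real.Gamma (α * k + β + 1) * (α * k + β) ^ α :=
      mul_le_mul_of_nonneg_left hk hΓ1.le
    have h3 : α * (k+1:ℕ) + β + 1 = α * k + β + 1 + α := by push_cast; ring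
    rw [h3]
    exact h2.trans h1
  rw [norm_div, norm_div, Real.norm_eq_abs (Real.Gamma _), Real.norm_eq_abs (Real.Gamma _),
    abs_of_pos hΓ1, abs_of_pos hΓ2, norm_pow, norm_pow, Real.norm_eq_abs]
  calc |z| ^ (k+1) / Real.Gamma (α * ↑(k + 1) + β + 1)
      ≤ |z| ^ (k+1) / (Real.Gamma (α * ↑k + β + 1) * (2 * |z| + 1)) := by
        gcongr

    _ = |z| ^ k / Real.Gamma (α * ↑k + β + 1) * (|z| / (2 * |z| + 1)) := by
        rw [pow_succ]
        field_simp
    _ ≤ |z| ^ k / Real.Gamma (α * ↑k + β + 1) * (1 / 2) := by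
        apply mul_le_mul_of_nonneg_left _ (by positivity)
        rw [div_le_iff₀ (by positivity)]
        nlinarith [abs_nonneg z]
    _ = 1 / 2 * (|z| ^ k / Real.Gamma (α * ↑k + β + 1)) := by ring

lemma ml_summable {α : ℝ} (hα : 0 < α) (z : ℝ) :
    Summable fun k : ℕ => z ^ k / Real.Gamma (α * k + 1) := by
  have := ml_summable_aux hα le_rfl z
  simpa using this

lemma ml_nonneg {α z : ℝ} (hα : 0 < α) (hz : 0 ≤ z) : 0 ≤ mittagLeffler α z :=
  tsum_nonneg fun k => div_nonneg (pow_nonneg hz k)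
    (Real.Gamma_pos_of_pos (by positivity)).le

lemma ml_zero {α : ℝ} (hα : 0 < α) : mittagLeffler α 0 = 1 := by
  rw [mittagLeffler, tsum_eq_single 0 (fun k hk => by
    simp [zero_pow hk])]
  simp [Real.Gamma_one]

lemma ml_continuousOn {α : ℝ} (hα : 0 < α) (R : ℝ) :
    ContinuousOn (mittagLeffler α) (Set.Icc (-R) R) := by
  have hu : Summable fun k : ℕ => |R| ^ k / Real.Gamma (α * k + 1) := ml_summable hα |R|
  have h := tendstoUniformlyOn_tsum (f := fun (k : ℕ) (z : ℝ) => z ^ k / Real.Gamma (α * k + 1))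
    hu (s := Set.Icc (-R) R) ?_
  · exact h.continuousOn (Filter.Eventually.of_forall fun t => continuousOn_finset_sum t
      fun k _ => ((continuous_pow k).continuousOn).div_const _).frequently
  · intro k z hz
    have hΓ : 0 < Real.Gamma (α * k + 1) := Real.Gamma_pos_of_pos (by positivity)
    rw [norm_div, norm_pow, Real.norm_eq_abs, Real.norm_eq_abs, abs_of_pos hΓ]
    have hzR : |z| ≤ |R| := abs_le.2
      ⟨by linarith [hz.1, le_abs_self R, neg_abs_le R], by linarith [hz.2, le_abs_self R]⟩
    gcongr


lemma pow_rpow_aux {s : ℝ} (hs : 0 ≤ s) (M α : ℝ) (k : ℕ) :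
    (M * s ^ α) ^ k = M ^ k * s ^ (α * k) := by
  rw [mul_pow, ← Real.rpow_natCast (s ^ α) k, ← Real.rpow_mul hs]

lemma ml_volterra {α M s : ℝ} (hα : 0 < α) (hM : 0 ≤ M) (hs : 0 ≤ s) :
    M * ∫ τ in (0:ℝ)..s, (s - τ) ^ (α - 1) * mittagLeffler α (M * τ ^ α)
      = Real.Gamma α * (mittagLeffler α (M * s ^ α) - 1) := by
  have hΓα : 0 < Real.Gamma α := Real.Gamma_pos_of_pos hα
  have hΓk : ∀ k : ℕ, 0 < Real.Gamma (α * k + 1) := fun k =>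
    Real.Gamma_pos_of_pos (by positivity)
  rcases eq_or_lt_of_le hs with rfl | hs
  · simp [Real.zero_rpow hα.ne', ml_zero hα]
  -- definitions
  set g : ℕ → ℝ → ℝ := fun k τ =>
    (M ^ k / Real.Gamma (α * k + 1)) * ((s - τ) ^ (α - 1) * τ ^ (α * k)) with hg
  set c : ℕ → ℝ := fun k =>
    Real.Gamma α * (M ^ k * s ^ (α * (k + 1)) / Real.Gamma (α * (k + 1) + 1)) with hc
  have hgint : ∀ k, IntervalIntegrable (g k) volume 0 s := by
    intro k
    have h1 : IntervalIntegrable (fun τ => (s - τ) ^ (α - 1) * τ ^ (α * k)) volume 0 s :=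
      (II_rpow hα hs.le).mul_continuousOn
        ((aux_continuous_rpow_const (by positivity)).continuousOn)
    exact h1.const_mul _
  have hgIntOn : ∀ k, IntegrableOn (g k) (Set.Ioc 0 s) := by
    intro k
    have := hgint k
    rwa [intervalIntegrable_iff, uIoc_of_le hs.le] at this
  have hgval : ∀ k, ∫ τ in (0:ℝ)..s, g k τ = c k := by
    intro k
    rw [hg]
    simp only
    rw [intervalIntegral.integral_const_mul, beta_scaled hα (by positivity) hs.le, hc]
    have e1 : α + α * k = α * (k + 1) := by push_cast; ring
    have e2 : α * k + 1 + α = α * (k + 1) + 1 := by push_cast; ring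
    rw [e1]
    simp only
    have hΓ2 : (0:ℝ) < Real.Gamma (α * (↑k + 1) + 1) := Real.Gamma_pos_of_pos (by positivity)
    field_simp
  have hcnn : ∀ k, 0 ≤ c k := fun k => by
    rw [hc]
    have hΓ2 : (0:ℝ) < Real.Gamma (α * (↑k + 1) + 1) := Real.Gamma_pos_of_pos (by positivity)
    positivity
  have hcsum : Summable c := by
    have hbase := (ml_summable_aux hα hα.le (M * s ^ α)).mul_left (Real.Gamma α * s ^ α)
    apply hbase.congr
    intro k
    rw [hc]
    simp only
    rw [pow_rpow_aux hs.le]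
    have e3 : s ^ (α * (↑k + 1)) = s ^ (α * k) * s ^ α := by
      rw [← Real.rpow_add hs]
      congr 1
      push_cast
      ring
    rw [e3]
    have e4 : α * ↑k + α + 1 = α * (↑k + 1) + 1 := by push_cast; ring
    rw [e4]
    ring
  -- pointwise sum identity on Ioc 0 s
  have hterm : ∀ τ ∈ Set.Ioc (0:ℝ) s,
      (∑' k, g k τ) = (s - τ) ^ (α - 1) * mittagLeffler α (M * τ ^ α) := by
    intro τ hτ
    rw [mittagLeffler, ← tsum_mul_left]
    apply tsum_congr
    intro k
    rw [hg]
    simp only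
    rw [pow_rpow_aux hτ.1.le]
    ring
  -- interchange sum and integral
  have hmeas : ∀ k, AEStronglyMeasurable (g k) (volume.restrict (Set.Ioc 0 s)) := fun k =>
    (hgIntOn k).aestronglyMeasurable
  have hgnn : ∀ k, ∀ τ ∈ Set.Ioc (0:ℝ) s, 0 ≤ g k τ := by
    intro k τ hτ
    rw [hg]
    simp only
    have h1 : (0:ℝ) ≤ (s - τ) ^ (α - 1) := Real.rpow_nonneg (by linarith [hτ.2]) _
    have h2 : (0:ℝ) ≤ τ ^ (α * k) := Real.rpow_nonneg hτ.1.le _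
    have h3 := (hΓk k).le
    positivity
  have hsetval : ∀ k, ∫ τ in Set.Ioc (0:ℝ) s, g k τ = c k := by
    intro k
    rw [← intervalIntegral.integral_of_le hs.le]
    exact hgval k
  have hlint : ∑' k, ∫⁻ τ in Set.Ioc (0:ℝ) s, ‖g k τ‖₊ ∂volume ≠ ⊤ := by
    have heq : ∀ k, ∫⁻ τ in Set.Ioc (0:ℝ) s, (‖g k τ‖₊ : ENNReal) ∂volume
        = ENNReal.ofReal (c k) := by
      intro k
      have hnn : ∀ᵐ τ ∂(volume.restrict (Set.Ioc (0:ℝ) s)), 0 ≤ g k τ :=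
        ae_restrict_of_forall_mem measurableSet_Ioc (hgnn k)
      rw [lintegral_congr_ae (f := fun τ => (‖g k τ‖₊ : ENNReal)) (hnn.mono fun τ h => (Real.enorm_eq_ofReal h : (‖g k τ‖₊ : ENNReal) = ENNReal.ofReal (g k τ))),
        ← ofReal_integral_eq_lintegral_ofReal (hgIntOn k) hnn, hsetval k]
    simp only [heq]
    rw [← ENNReal.ofReal_tsum_of_nonneg hcnn hcsum]
    exact ENNReal.ofReal_ne_top
  have hinterchange := MeasureTheory.integral_tsum hmeas hlint
  -- assemble
  have hlhs : ∫ τ in (0:ℝ)..s, (s - τ) ^ (α - 1) * mittagLeffler α (M * τ ^ α) = ∑' k, c k := by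
    rw [intervalIntegral.integral_of_le hs.le]
    rw [← MeasureTheory.setIntegral_congr_fun measurableSet_Ioc hterm]
    rw [hinterchange]
    exact tsum_congr hsetval
  rw [hlhs]
  -- final sum computation
  set b : ℕ → ℝ := fun j => (M * s ^ α) ^ j / Real.Gamma (α * j + 1) with hb
  have hbsum : Summable b := ml_summable hα _
  have hshift : ∑' j, b j = 1 + ∑' k, b (k + 1) := by
    rw [Summable.tsum_eq_zero_add hbsum]
    congr 1
    rw [hb]
    simp [Real.Gamma_one]
  have hMc : ∀ k, M * c k = Real.Gamma α * b (k + 1) := by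
    intro k
    rw [hc, hb]
    simp only
    rw [pow_rpow_aux hs.le]
    push_cast
    ring
  rw [← tsum_mul_left]
  calc (∑' k, M * c k) = ∑' k, Real.Gamma α * b (k + 1) := by
        exact tsum_congr hMc
    _ = Real.Gamma α * ∑' k, b (k + 1) := tsum_mul_left
    _ = Real.Gamma α * (mittagLeffler α (M * s ^ α) - 1) := by
        rw [mittagLeffler, ← hb, hshift]
        ring

lemma frac_gronwall {α t₀ M : ℝ} (hα : 0 < α) (hα1 : α < 1) (ht₀ : 0 ≤ t₀) (hM : 0 ≤ M)
    {u : ℝ → ℝ} (hu : ContinuousOn u (Set.Icc 0 t₀))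
    (key : ∀ s ∈ Set.Icc (0:ℝ) t₀,
      u s ≤ u 0 + (M / Real.Gamma α) * ∫ τ in (0:ℝ)..s, (s - τ) ^ (α - 1) * u τ) :
    u t₀ ≤ u 0 * mittagLeffler α (M * t₀ ^ α) := by
  have hΓ : 0 < Real.Gamma α := Real.Gamma_pos_of_pos hα
  set E : ℝ → ℝ := fun s => mittagLeffler α (M * s ^ α) with hE
  have hE0 : E 0 = 1 := by
    rw [hE]
    simp only [Real.zero_rpow hα.ne', mul_zero]
    exact ml_zero hα
  have hEcont : ContinuousOn E (Set.Icc 0 t₀) := by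
    set R := M * t₀ ^ α with hR
    have hR0 : 0 ≤ R := by positivity
    apply (ml_continuousOn hα R).comp
    · exact (continuous_const.mul (aux_continuous_rpow_const hα.le)).continuousOn
    · intro s hs
      have h1 : (0:ℝ) ≤ M * s ^ α := mul_nonneg hM (Real.rpow_nonneg hs.1 α)
      refine ⟨by simp only; linarith, ?_⟩
      simp only
      exact mul_le_mul_of_nonneg_left (Real.rpow_le_rpow hs.1 hs.2 hα.le) hM
  have hEnn : ∀ s ∈ Set.Icc (0:ℝ) t₀, 0 ≤ E s := fun s hs =>
    ml_nonneg hα (mul_nonneg hM (Real.rpow_nonneg hs.1 α))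
  have main : ∀ δ > (0:ℝ), ∀ s ∈ Set.Icc (0:ℝ) t₀, u s < (u 0 + δ) * E s := by
    intro δ hδ
    by_contra hcon
    push_neg at hcon
    obtain ⟨s₁, hs₁, hles⟩ := hcon
    set S := {s ∈ Set.Icc (0:ℝ) t₀ | (u 0 + δ) * E s ≤ u s} with hS
    have hSne : S.Nonempty := ⟨s₁, hs₁, hles⟩
    have hScl : IsClosed S := by
      have : S = Set.Icc 0 t₀ ∩ (fun s => u s - (u 0 + δ) * E s) ⁻¹' (Set.Ici 0) := by
        ext x
        simp only [hS, Set.mem_inter_iff, Set.mem_preimage, Set.mem_Ici, Set.mem_setOf_eq,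
          sub_nonneg]
      rw [this]
      exact ContinuousOn.preimage_isClosed_of_isClosed
        (hu.sub (continuousOn_const.mul hEcont)) isClosed_Icc isClosed_Ici
    have hbdd : BddBelow S := ⟨0, fun x hx => hx.1.1⟩
    set c := sInf S with hcdef
    have hcS : c ∈ S := hScl.csInf_mem hSne hbdd
    have hcIcc : c ∈ Set.Icc (0:ℝ) t₀ := hcS.1
    have hc0 : 0 < c := by
      rcases eq_or_lt_of_le hcIcc.1 with hrfl | h
      · exfalso
        have := hcS.2
        rw [← hrfl, hE0] at this
        simp at this
        linarith
      · exact h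
    have hlt : ∀ τ ∈ Set.Ico (0:ℝ) c, u τ < (u 0 + δ) * E τ := by
      intro τ hτ
      by_contra h'
      push_neg at h'
      have hτS : τ ∈ S := ⟨⟨hτ.1, le_trans hτ.2.le hcIcc.2⟩, h'⟩
      exact absurd (csInf_le hbdd hτS) (not_le.2 hτ.2)
    -- integrability
    have huc : ContinuousOn u (Set.Icc 0 c) := hu.mono (Set.Icc_subset_Icc_right hcIcc.2)
    have hEc : ContinuousOn E (Set.Icc 0 c) := hEcont.mono (Set.Icc_subset_Icc_right hcIcc.2)
    have hIu : IntervalIntegrable (fun τ => (c - τ) ^ (α - 1) * u τ) volume 0 c :=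
      (II_rpow hα hc0.le).mul_continuousOn (by rwa [Set.uIcc_of_le hc0.le])
    have hIw : IntervalIntegrable (fun τ => (c - τ) ^ (α - 1) * ((u 0 + δ) * E τ)) volume 0 c :=
      (II_rpow hα hc0.le).mul_continuousOn
        (by rw [Set.uIcc_of_le hc0.le]; exact continuousOn_const.mul hEc)
    have hmono : (∫ τ in (0:ℝ)..c, (c - τ) ^ (α - 1) * u τ)
        ≤ ∫ τ in (0:ℝ)..c, (c - τ) ^ (α - 1) * ((u 0 + δ) * E τ) := by
      apply intervalIntegral.integral_mono_on hc0.le hIu hIw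
      intro τ hτ
      rcases eq_or_lt_of_le hτ.2 with hrfl | hlt'
      · subst hrfl
        rw [sub_self, Real.zero_rpow (by linarith : α - 1 ≠ 0)]
        simp
      · exact mul_le_mul_of_nonneg_left (hlt τ ⟨hτ.1, hlt'⟩).le
          (Real.rpow_nonneg (by linarith [hτ.2]) _)
    have hpull : (∫ τ in (0:ℝ)..c, (c - τ) ^ (α - 1) * ((u 0 + δ) * E τ))
        = (u 0 + δ) * ∫ τ in (0:ℝ)..c, (c - τ) ^ (α - 1) * E τ := by
      rw [← intervalIntegral.integral_const_mul]
      apply intervalIntegral.integral_congr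
      intro τ _
      ring
    have hvolt : M * ∫ τ in (0:ℝ)..c, (c - τ) ^ (α - 1) * E τ
        = Real.Gamma α * (E c - 1) := ml_volterra hα hM hc0.le
    have hkeyc := key c hcIcc
    have hub : u c ≤ u 0 + (u 0 + δ) * (E c - 1) := by
      have h1 : (M / Real.Gamma α) * (∫ τ in (0:ℝ)..c, (c - τ) ^ (α - 1) * u τ)
          ≤ (M / Real.Gamma α) * ((u 0 + δ) * ∫ τ in (0:ℝ)..c, (c - τ) ^ (α - 1) * E τ) := by
        rw [← hpull]
        exact mul_le_mul_of_nonneg_left hmono (by positivity)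
      have h2 : (M / Real.Gamma α) * ((u 0 + δ) * ∫ τ in (0:ℝ)..c, (c - τ) ^ (α - 1) * E τ)
          = (u 0 + δ) * (E c - 1) := by
        have : (M / Real.Gamma α) * ((u 0 + δ) * ∫ τ in (0:ℝ)..c, (c - τ) ^ (α - 1) * E τ)
            = (u 0 + δ) / Real.Gamma α
              * (M * ∫ τ in (0:ℝ)..c, (c - τ) ^ (α - 1) * E τ) := by ring
        rw [this, hvolt]
        field_simp
      linarith [hkeyc, h1, h2.le, h2.ge]
    have hlow := hcS.2
    nlinarith [hub, hlow]
  -- conclude by letting δ → 0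
  have hEt := hEnn t₀ ⟨ht₀, le_rfl⟩
  by_contra hcon
  push_neg at hcon
  set ε := u t₀ - u 0 * E t₀ with hε
  have hεpos : 0 < ε := by rw [hε]; linarith
  have hmain := main (ε / (E t₀ + 1)) (by positivity) t₀ ⟨ht₀, le_rfl⟩
  have h2 : ε / (E t₀ + 1) * E t₀ < ε := by
    rw [div_mul_eq_mul_div, div_lt_iff₀ (by positivity)]
    nlinarith
  nlinarith [hmain, h2]

/-- Divergence rate for solutions of `d`-dimensional Caputo FDEs (in Volterra integral form),
with the Euclidean norm:
`‖x₂(t) - x₁(t)‖ ≤ ‖x₂(0) - x₁(0)‖ E_α((max_{0 ≤ τ ≤ t} L(τ)) t^α)`. -/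
theorem divergence_rate_ddim
    (α T : ℝ) (hα : α ∈ Set.Ioo (0 : ℝ) 1) (hT : 0 < T)
    (d : ℕ) (hd : 1 ≤ d)
    (f : ℝ → EuclideanSpace ℝ (Fin d) → EuclideanSpace ℝ (Fin d))
    (hf : ContinuousOn (fun p : ℝ × EuclideanSpace ℝ (Fin d) => f p.1 p.2)
      (Set.Icc 0 T ×ˢ (Set.univ : Set (EuclideanSpace ℝ (Fin d)))))
    (L : ℝ → ℝ) (hL : ContinuousOn L (Set.Icc 0 T))
    (hLnonneg : ∀ t ∈ Set.Icc (0 : ℝ) T, 0 ≤ L t)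
    (hLip : ∀ t ∈ Set.Icc (0 : ℝ) T, ∀ x y : EuclideanSpace ℝ (Fin d),
      ‖f t x - f t y‖ ≤ L t * ‖x - y‖)
    (x₁ x₂ : ℝ → EuclideanSpace ℝ (Fin d))
    (hx₁ : ContinuousOn x₁ (Set.Icc 0 T)) (hx₂ : ContinuousOn x₂ (Set.Icc 0 T))
    (hvolt₁ : ∀ t ∈ Set.Icc (0 : ℝ) T,
      x₁ t = x₁ 0 + (1 / Real.Gamma α) •
        ∫ τ in (0 : ℝ)..t, (t - τ) ^ (α - 1) • f τ (x₁ τ))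
    (hvolt₂ : ∀ t ∈ Set.Icc (0 : ℝ) T,
      x₂ t = x₂ 0 + (1 / Real.Gamma α) •
        ∫ τ in (0 : ℝ)..t, (t - τ) ^ (α - 1) • f τ (x₂ τ)) :
    ∀ t ∈ Set.Icc (0 : ℝ) T,
      ‖x₂ t - x₁ t‖ ≤ ‖x₂ 0 - x₁ 0‖ * mittagLeffler α (sSup (L '' Set.Icc 0 t) * t ^ α) := by
  obtain ⟨hα0, hα1⟩ := hα
  have hΓ : 0 < Real.Gamma α := Real.Gamma_pos_of_pos hα0
  intro t ht
  obtain ⟨ht0, htT⟩ := ht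
  set M := sSup (L '' Set.Icc 0 t) with hMdef
  have hsub : Set.Icc (0:ℝ) t ⊆ Set.Icc 0 T := Set.Icc_subset_Icc_right htT
  have hbdd : BddAbove (L '' Set.Icc 0 t) :=
    (isCompact_Icc.image_of_continuousOn (hL.mono hsub)).bddAbove
  have hLM : ∀ τ ∈ Set.Icc (0:ℝ) t, L τ ≤ M := fun τ hτ =>
    le_csSup hbdd ⟨τ, hτ, rfl⟩
  have hM0 : 0 ≤ M :=
    le_trans (hLnonneg 0 ⟨le_rfl, hT.le⟩) (hLM 0 ⟨le_rfl, ht0⟩)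
  set u : ℝ → ℝ := fun s => ‖x₂ s - x₁ s‖ with hu
  have hxc : ContinuousOn u (Set.Icc 0 t) := ((hx₂.sub hx₁).norm).mono hsub
  have hF₁ : ContinuousOn (fun τ => f τ (x₁ τ)) (Set.Icc 0 T) :=
    hf.comp (continuousOn_id.prodMk hx₁) (fun τ hτ => ⟨hτ, Set.mem_univ _⟩)
  have hF₂ : ContinuousOn (fun τ => f τ (x₂ τ)) (Set.Icc 0 T) :=
    hf.comp (continuousOn_id.prodMk hx₂) (fun τ hτ => ⟨hτ, Set.mem_univ _⟩)
  have hΔ : ContinuousOn (fun τ => f τ (x₂ τ) - f τ (x₁ τ)) (Set.Icc 0 T) := hF₂.sub hF₁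
  have key : ∀ s ∈ Set.Icc (0:ℝ) t,
      u s ≤ u 0 + (M / Real.Gamma α) * ∫ τ in (0:ℝ)..s, (s - τ) ^ (α - 1) * u τ := by
    intro s hs
    have hs0 : 0 ≤ s := hs.1
    have hsT : s ≤ T := le_trans hs.2 htT
    have hsmem : s ∈ Set.Icc (0:ℝ) T := ⟨hs0, hsT⟩
    have hsubs : Set.Icc (0:ℝ) s ⊆ Set.Icc 0 T := Set.Icc_subset_Icc_right hsT
    have hI₁ : IntervalIntegrable (fun τ => (s - τ) ^ (α - 1) • f τ (x₁ τ)) volume 0 s :=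
      II_rpow_smul hα0 hs0 (hF₁.mono hsubs)
    have hI₂ : IntervalIntegrable (fun τ => (s - τ) ^ (α - 1) • f τ (x₂ τ)) volume 0 s :=
      II_rpow_smul hα0 hs0 (hF₂.mono hsubs)
    have hIΔ : IntervalIntegrable
        (fun τ => (s - τ) ^ (α - 1) • (f τ (x₂ τ) - f τ (x₁ τ))) volume 0 s :=
      II_rpow_smul hα0 hs0 (hΔ.mono hsubs)
    have e : (∫ τ in (0:ℝ)..s, (s - τ) ^ (α - 1) • (f τ (x₂ τ) - f τ (x₁ τ)))
        = (∫ τ in (0:ℝ)..s, (s - τ) ^ (α - 1) • f τ (x₂ τ))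
          - ∫ τ in (0:ℝ)..s, (s - τ) ^ (α - 1) • f τ (x₁ τ) := by
      rw [← intervalIntegral.integral_sub hI₂ hI₁]
      apply intervalIntegral.integral_congr
      intro τ _
      simp [smul_sub]
    have hdiff : x₂ s - x₁ s = (x₂ 0 - x₁ 0) + (1 / Real.Gamma α) •
        ∫ τ in (0:ℝ)..s, (s - τ) ^ (α - 1) • (f τ (x₂ τ) - f τ (x₁ τ)) := by
      rw [e, smul_sub, hvolt₂ s hsmem, hvolt₁ s hsmem]
      abel
    have hmono : (∫ τ in (0:ℝ)..s, ‖(s - τ) ^ (α - 1) • (f τ (x₂ τ) - f τ (x₁ τ))‖)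
        ≤ ∫ τ in (0:ℝ)..s, (s - τ) ^ (α - 1) * (M * u τ) := by
      apply intervalIntegral.integral_mono_on hs0 hIΔ.norm
        ((II_rpow hα0 hs0).mul_continuousOn (by
          rw [Set.uIcc_of_le hs0]
          exact continuousOn_const.mul (hxc.mono (Set.Icc_subset_Icc_right hs.2))))
      intro τ hτ
      have hτT : τ ∈ Set.Icc (0:ℝ) T := hsubs hτ
      have hτt : τ ∈ Set.Icc (0:ℝ) t := ⟨hτ.1, le_trans hτ.2 hs.2⟩
      have hrnn : (0:ℝ) ≤ (s - τ) ^ (α - 1) := Real.rpow_nonneg (by linarith [hτ.2]) _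
      rw [norm_smul, Real.norm_eq_abs, abs_of_nonneg hrnn]
      have h1 : ‖f τ (x₂ τ) - f τ (x₁ τ)‖ ≤ L τ * u τ := hLip τ hτT (x₂ τ) (x₁ τ)
      have h2 : L τ * u τ ≤ M * u τ :=
        mul_le_mul_of_nonneg_right (hLM τ hτt) (norm_nonneg _)
      exact mul_le_mul_of_nonneg_left (h1.trans h2) hrnn
    have hpull : (∫ τ in (0:ℝ)..s, (s - τ) ^ (α - 1) * (M * u τ))
        = M * ∫ τ in (0:ℝ)..s, (s - τ) ^ (α - 1) * u τ := by
      rw [← intervalIntegral.integral_const_mul]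
      apply intervalIntegral.integral_congr
      intro τ _
      ring
    calc u s = ‖(x₂ 0 - x₁ 0) + (1 / Real.Gamma α) •
          ∫ τ in (0:ℝ)..s, (s - τ) ^ (α - 1) • (f τ (x₂ τ) - f τ (x₁ τ))‖ := by
          rw [hu]; simp only; rw [hdiff]
      _ ≤ u 0 + ‖(1 / Real.Gamma α) •
          ∫ τ in (0:ℝ)..s, (s - τ) ^ (α - 1) • (f τ (x₂ τ) - f τ (x₁ τ))‖ := norm_add_le _ _
      _ = u 0 + (1 / Real.Gamma α)
          * ‖∫ τ in (0:ℝ)..s, (s - τ) ^ (α - 1) • (f τ (x₂ τ) - f τ (x₁ τ))‖ := by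
          rw [norm_smul, Real.norm_eq_abs, abs_of_pos (by positivity)]
      _ ≤ u 0 + (1 / Real.Gamma α)
          * ∫ τ in (0:ℝ)..s, ‖(s - τ) ^ (α - 1) • (f τ (x₂ τ) - f τ (x₁ τ))‖ := by
          have := intervalIntegral.norm_integral_le_integral_norm
            (f := fun τ => (s - τ) ^ (α - 1) • (f τ (x₂ τ) - f τ (x₁ τ)))
            (μ := volume) hs0
          have h3 : (0:ℝ) ≤ 1 / Real.Gamma α := by positivity
          nlinarith [this]
      _ ≤ u 0 + (1 / Real.Gamma α) * ∫ τ in (0:ℝ)..s, (s - τ) ^ (α - 1) * (M * u τ) := by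
          have h3 : (0:ℝ) ≤ 1 / Real.Gamma α := by positivity
          nlinarith [hmono]
      _ = u 0 + (M / Real.Gamma α) * ∫ τ in (0:ℝ)..s, (s - τ) ^ (α - 1) * u τ := by
          rw [hpull]
          ring
  exact frac_gronwall hα0 hα1 ht0 hM0 hxc key
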